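/- Let V be a d-dimensional real inner product space (d ≥ 2), R a curvature tensor (with the symmetries of a Riemann tensor) on V, and k ∈ ℝ. Suppose that for every pair of orthonormal vectors u, v ∈ V the identity Ric(u,u) + Sec(u,v) = kd holds, where Ric(u,u) = Σ_i ⟨R(e_i,u)u,e_i⟩ and Sec(u,v) = ⟨R(u,v)v,u⟩. Then Ric(u,u) = (d-1)k and Sec(u,v) = k for all orthonormal u, v. -/

import Mathlib

open scoped RealInnerProductSpace

/-- The "trace-like" sum `∑ ⟪T (b i), b i⟫` is independent of the orthonormal basis. -/
lemma sum_inner_map_indep {ι : Type*} [Fintype ι] {V : Type*} [NormedAddCommGroup V]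
    [InnerProductSpace ℝ V] (T : V →ₗ[ℝ] V) (b c : OrthonormalBasis ι ℝ V) :
    ∑ i, ⟪T (c i), c i⟫ = ∑ i, ⟪T (b i), b i⟫ := by
  calc ∑ j, ⟪T (c j), c j⟫
      = ∑ j, ∑ i, ⟪T (c j), b i⟫ * ⟪b i, c j⟫ := by
        simp [b.sum_inner_mul_inner]
    _ = ∑ i, ∑ j, ⟪T (c j), b i⟫ * ⟪b i, c j⟫ := Finset.sum_comm
    _ = ∑ i, ⟪T (b i), b i⟫ := by
        refine Finset.sum_congr rfl fun i _ => ?_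
        have h := congrArg T (c.sum_repr' (b i))
        rw [map_sum] at h
        calc ∑ j, ⟪T (c j), b i⟫ * ⟪b i, c j⟫
            = ∑ j, ⟪T (⟪c j, b i⟫ • c j), b i⟫ := by
              refine Finset.sum_congr rfl fun j _ => ?_
              rw [map_smul, real_inner_smul_left, real_inner_comm (b i) (c j), mul_comm]
          _ = ⟪T (b i), b i⟫ := by rw [← sum_inner, h]

/-- Linear-algebra step at the end of the proof of Theorem 6.1: if
`Ric(u,u) + Sec(u,v) = kd` for every orthonormal pair `u, v`, then
`Ric(u,u) = (d-1)k` and `Sec(u,v) = k` for all orthonormal `u, v`. -/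
theorem stmt14 (d : ℕ) (hd : 2 ≤ d) (V : Type*) [NormedAddCommGroup V]
    [InnerProductSpace ℝ V] [FiniteDimensional ℝ V] (hrank : Module.finrank ℝ V = d)
    (b : OrthonormalBasis (Fin d) ℝ V) (k : ℝ)
    (R : V →ₗ[ℝ] V →ₗ[ℝ] V →ₗ[ℝ] V)
    (hanti : ∀ u v w : V, R u v w = -R v u w)
    (hpair : ∀ u v w z : V, ⟪R u v w, z⟫ = ⟪R w z u, v⟫)
    (hbianchi : ∀ u v w : V, R u v w + R v w u + R w u v = 0)
    (hyp : ∀ u v : V, ‖u‖ = 1 → ‖v‖ = 1 → ⟪u, v⟫ = 0 →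
      (∑ i : Fin d, ⟪R (b i) u u, b i⟫) + ⟪R u v v, u⟫ = k * d) :
    ∀ u v : V, ‖u‖ = 1 → ‖v‖ = 1 → ⟪u, v⟫ = 0 →
      (∑ i : Fin d, ⟪R (b i) u u, b i⟫) = ((d : ℝ) - 1) * k ∧ ⟪R u v v, u⟫ = k := by
  intro u v hu hv huv
  -- the linear map w ↦ R w u u
  haveI : NeZero d := ⟨by omega⟩
  set T : V →ₗ[ℝ] V := (R.flip u).flip u with hT
  have hTapp : ∀ w, T w = R w u u := fun w => rfl
  -- extend u to an orthonormal basis c with c 0 = u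
  have hcard : Module.finrank ℝ V = Fintype.card (Fin d) := by simpa using hrank
  have horth : Orthonormal ℝ (Set.restrict ({0} : Set (Fin d)) (fun _ : Fin d => u)) := by
    constructor
    · intro i
      exact hu
    · intro i j hij
      exact absurd (Subsingleton.elim i j) hij
  obtain ⟨c, hc⟩ := Orthonormal.exists_orthonormalBasis_extension_of_card_eq hcard horth
  have hc0 : c 0 = u := hc 0 rfl
  -- Ric(u,u) in the basis b equals the same sum in basis c
  have hric : (∑ i : Fin d, ⟪R (b i) u u, b i⟫) = ∑ i : Fin d, ⟪R (c i) u u, c i⟫ := by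
    simpa [hTapp] using (sum_inner_map_indep T b c).symm
  set Ric := ∑ i : Fin d, ⟪R (b i) u u, b i⟫ with hRic
  -- the i = 0 term vanishes
  have hzero : ⟪R (c 0) u u, c 0⟫ = 0 := by
    have : R u u u = 0 := by
      have h := hanti u u u
      have h2 : (2 : ℝ) • R u u u = 0 := by
        rw [two_smul]; nth_rw 1 [h]; simp
      simpa using (smul_eq_zero.mp h2).resolve_left (by norm_num)
    rw [hc0, this, inner_zero_left]
  -- for i ≠ 0, hyp applies with v = c i
  have hterm : ∀ i : Fin d, i ≠ 0 → ⟪R (c i) u u, c i⟫ = k * d - Ric := by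
    intro i hi
    have hnorm : ‖c i‖ = 1 := c.orthonormal.1 i
    have hperp : ⟪u, c i⟫ = 0 := by
      simpa [hc0] using c.orthonormal.2 (show (0 : Fin d) ≠ i from Ne.symm hi)
    have h := hyp u (c i) hu hnorm hperp
    have hsec : ⟪R u (c i) (c i), u⟫ = ⟪R (c i) u u, c i⟫ := hpair u (c i) (c i) u
    rw [hsec] at h
    linarith
  -- sum over the basis c
  have hsum : Ric = ∑ i : Fin d, ⟪R (c i) u u, c i⟫ := hric
  have h0d : (0 : Fin d) ∈ (Finset.univ : Finset (Fin d)) := Finset.mem_univ _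
  have hsplit : ∑ i : Fin d, ⟪R (c i) u u, c i⟫
      = ⟪R (c 0) u u, c 0⟫ + ∑ i ∈ Finset.univ.erase 0, ⟪R (c i) u u, c i⟫ :=
    (Finset.add_sum_erase _ _ h0d).symm
  have hconst : ∑ i ∈ Finset.univ.erase 0, ⟪R (c i) u u, c i⟫
      = ((Finset.univ.erase (0 : Fin d)).card : ℝ) * (k * d - Ric) := by
    rw [Finset.sum_congr rfl (fun i hi => hterm i (Finset.ne_of_mem_erase hi))]
    simp [mul_comm]
    ring
  have hcardE : ((Finset.univ.erase (0 : Fin d)).card : ℝ) = (d : ℝ) - 1 := by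
    rw [Finset.card_erase_of_mem h0d]
    simp
    have : 1 ≤ d := by omega
    push_cast [Nat.cast_sub this]
    ring
  have hdpos : (2 : ℝ) ≤ (d : ℝ) := by exact_mod_cast hd
  have key : Ric = ((d : ℝ) - 1) * k := by
    rw [hsum, hsplit, hzero, hconst, hcardE] at hRic
    have hne : (d : ℝ) ≠ 0 := by linarith
    field_simp at hRic
    nlinarith [hRic]
  refine ⟨key, ?_⟩
  have h := hyp u v hu hv huv
  rw [← hRic, key] at h
  linarith
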